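/- Let 0 < ν < π, let α > 0, β > α, C₀ > 0, and let k be a positive integer. Suppose ψ is holomorphic on the open sector S⁰_ν and satisfies |ψ(z)| ≤ C₀ |z|^α / (1 + |z|^β) for all z ∈ S⁰_ν. Then for every 0 < ω < ν there exists a constant C > 0 such that the k-th derivative ψ^{(k)} satisfies |ψ^{(k)}(z)| ≤ C · (1/|z|^k) · |z|^α / (1 + |z|^β) for all z ∈ S⁰_ω. -/

import Mathlib

open Complex

/-- The open sector `S⁰_ν = {z ≠ 0 : |arg z| < ν}` in the complex plane. -/
def sector (ν : ℝ) : Set ℂ := {z | z ≠ 0 ∧ |Complex.arg z| < ν}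

lemma isOpen_sector {ν : ℝ} (hν : ν < Real.pi) : IsOpen (sector ν) := by
  rw [isOpen_iff_mem_nhds]
  rintro z ⟨hz0, hzarg⟩
  have hslit : z ∈ Complex.slitPlane := by
    rw [Complex.mem_slitPlane_iff]
    by_contra h
    push_neg at h
    obtain ⟨hre, him⟩ := h
    rcases lt_or_eq_of_le hre with h' | h'
    · have : Complex.arg z = Real.pi := Complex.arg_eq_pi_iff.mpr ⟨h', him⟩
      rw [this, abs_of_pos Real.pi_pos] at hzarg
      linarith
    · exact hz0 (Complex.ext (by simp [h']) (by simp [him]))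
  have hc : ContinuousAt Complex.arg z := Complex.continuousAt_arg hslit
  have h1 : Complex.arg ⁻¹' (Set.Ioo (-ν) ν) ∈ nhds z := by
    apply hc.preimage_mem_nhds
    apply isOpen_Ioo.mem_nhds
    exact abs_lt.mp hzarg
  have h2 : {(0 : ℂ)}ᶜ ∈ nhds z := compl_singleton_mem_nhds hz0
  filter_upwards [h1, h2] with w hw1 hw2
  exact ⟨hw2, abs_lt.mpr hw1⟩

lemma abs_arcsin_le_arcsin_abs (t : ℝ) : |Real.arcsin t| ≤ Real.arcsin |t| := by
  rcases le_or_gt 0 t with h | h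
  · rw [_root_.abs_of_nonneg (Real.arcsin_nonneg.mpr h), _root_.abs_of_nonneg h]
  · have h1 : 0 ≤ Real.arcsin (-t) := Real.arcsin_nonneg.mpr (by linarith)
    have h2 : Real.arcsin t = -Real.arcsin (-t) := by rw [Real.arcsin_neg, neg_neg]
    rw [h2, abs_neg, _root_.abs_of_nonneg h1, abs_of_neg h]

/-- Key geometric fact: a closed ball of radius `δ‖z‖` around `z ∈ S⁰_ω` is contained
in `S⁰_ν` provided `δ` is small enough. -/
lemma closedBall_subset_sector {ν ω δ : ℝ} (hω : 0 < ω) (hων : ω < ν) (hνπ : ν < Real.pi)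
    (hδ0 : 0 < δ) (hδh : δ ≤ 1 / 2)
    (hδs : 2 * δ ≤ Real.sin (min (ν - ω) (Real.pi / 2)))
    {z : ℂ} (hz : z ∈ sector ω) :
    Metric.closedBall z (δ * ‖z‖) ⊆ sector ν := by
  obtain ⟨hz0, hzarg⟩ := hz
  have hzpos : 0 < ‖z‖ := norm_pos_iff.mpr hz0
  intro w hw
  rw [Metric.mem_closedBall, dist_eq_norm] at hw
  -- w is nonzero
  have hwz : ‖z‖ - ‖w - z‖ ≤ ‖w‖ := by
    have := norm_sub_norm_le z (z - w)
    simp only [sub_sub_cancel] at this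
    calc ‖z‖ - ‖w - z‖ = ‖z‖ - ‖z - w‖ := by rw [norm_sub_rev]
    _ ≤ ‖w‖ := this
  have hwpos : 0 < ‖w‖ := by nlinarith
  have hw0 : w ≠ 0 := norm_pos_iff.mp hwpos
  -- the quotient u = w / z
  set u : ℂ := w / z with hu_def
  have hu0 : u ≠ 0 := div_ne_zero hw0 hz0
  have huw : w = u * z := by rw [hu_def, div_mul_cancel₀ w hz0]
  have hu1 : ‖u - 1‖ ≤ δ := by
    have h : u - 1 = (w - z) / z := by
      rw [hu_def, eq_div_iff hz0, sub_mul, div_mul_cancel₀ w hz0, one_mul]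
    rw [h, norm_div, div_le_iff₀ hzpos]
    exact hw
  have hure : 1 - δ ≤ u.re := by
    have h1 : |(u - 1).re| ≤ ‖u - 1‖ := by
      exact Complex.abs_re_le_norm _
    simp only [Complex.sub_re, Complex.one_re] at h1
    have := abs_le.mp (h1.trans hu1)
    linarith [this.1]
  have huim : |u.im| ≤ δ := by
    have h1 : |(u - 1).im| ≤ ‖u - 1‖ := by
      exact Complex.abs_im_le_norm _
    simp only [Complex.sub_im, Complex.one_im, sub_zero] at h1
    exact h1.trans hu1
  have hure0 : 0 < u.re := by linarith
  have huabs : (1 : ℝ) / 2 ≤ ‖u‖ := by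
    have : |u.re| ≤ ‖u‖ := Complex.abs_re_le_norm u
    rw [abs_of_pos hure0] at this
    linarith
  have huabs0 : 0 < ‖u‖ := by linarith
  -- bound on arg u
  set m : ℝ := min (ν - ω) (Real.pi / 2) with hm_def
  have hm0 : 0 < m := lt_min (by linarith) (by positivity)
  have hmhalf : m ≤ Real.pi / 2 := min_le_right _ _
  have hargu : |Complex.arg u| ≤ m := by
    rw [Complex.arg_of_re_nonneg hure0.le]
    refine (abs_arcsin_le_arcsin_abs _).trans ?_
    have habs : |u.im / ‖u‖| ≤ Real.sin m := by
      rw [abs_div, abs_of_pos huabs0, div_le_iff₀ huabs0]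
      calc |u.im| ≤ δ := huim
      _ ≤ 2 * δ * (1 / 2) := by ring_nf; linarith
      _ ≤ Real.sin m * ‖u‖ := by
        apply mul_le_mul hδs huabs (by norm_num)
        exact Real.sin_nonneg_of_nonneg_of_le_pi hm0.le (by linarith [Real.pi_pos])
    calc Real.arcsin |u.im / ‖u‖| ≤ Real.arcsin (Real.sin m) :=
      Real.monotone_arcsin habs
    _ = m := Real.arcsin_sin (by linarith) hmhalf
  have hargu' : |Complex.arg u| ≤ ν - ω := hargu.trans (min_le_left _ _)
  -- arg of the product
  have hsum : Complex.arg u + Complex.arg z ∈ Set.Ioc (-Real.pi) Real.pi := by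
    constructor
    · have h1 : -(ν - ω) ≤ Complex.arg u := (abs_le.mp hargu').1
      have h2 : -ω < Complex.arg z := (abs_lt.mp hzarg).1
      linarith
    · have h1 : Complex.arg u ≤ ν - ω := (abs_le.mp hargu').2
      have h2 : Complex.arg z < ω := (abs_lt.mp hzarg).2
      linarith
  have hargw : Complex.arg w = Complex.arg u + Complex.arg z := by
    rw [huw]
    exact Complex.arg_mul hu0 hz0 hsum
  refine ⟨hw0, ?_⟩
  rw [hargw]
  calc |Complex.arg u + Complex.arg z| ≤ |Complex.arg u| + |Complex.arg z| := abs_add_le _ _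
  _ < (ν - ω) + ω := by
      apply add_lt_add_of_le_of_lt hargu' hzarg
  _ = ν := by ring

/-- Cauchy's estimate for iterated derivatives. -/
lemma cauchy_estimate {f : ℂ → ℂ} {c : ℂ} {R M : ℝ} (hR : 0 < R)
    (hd : DifferentiableOn ℂ f (Metric.closedBall c R))
    (hM : ∀ w ∈ Metric.closedBall c R, ‖f w‖ ≤ M) (k : ℕ) :
    ‖iteratedDeriv k f c‖ ≤ k.factorial * M / R ^ k := by
  have hM0 : 0 ≤ M :=
    (norm_nonneg _).trans (hM c (Metric.mem_closedBall_self hR.le))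
  lift R to NNReal using hR.le with R'
  have hR' : 0 < R' := by exact_mod_cast hR
  have hp : HasFPowerSeriesOnBall f (cauchyPowerSeries f c R') c R' :=
    hd.hasFPowerSeriesOnBall hR'
  have h1 := hp.factorial_smul (1 : ℂ) k
  have h2 : iteratedDeriv k f c = iteratedFDeriv ℂ k f c (fun _ => 1) :=
    iteratedDeriv_eq_iteratedFDeriv
  rw [h2, ← h1]
  rw [← Nat.cast_smul_eq_nsmul ℂ, norm_smul]
  have hcast : ‖(k.factorial : ℂ)‖ = (k.factorial : ℝ) := by
    simp
  rw [hcast]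
  have hcoef : ‖cauchyPowerSeries f c R' k (fun _ => (1 : ℂ))‖ ≤ M / (R' : ℝ) ^ k := by
    have hle : ‖cauchyPowerSeries f c R' k (fun _ => (1 : ℂ))‖ ≤ ‖cauchyPowerSeries f c R' k‖ := by
      have := (cauchyPowerSeries f c R' k).le_opNorm (fun _ => (1 : ℂ))
      simpa using this
    refine hle.trans ?_
    have hnorm := norm_cauchyPowerSeries_le f c R' k
    refine hnorm.trans ?_
    have hint : (∫ θ : ℝ in (0)..2 * Real.pi, ‖f (circleMap c R' θ)‖) ≤ 2 * Real.pi * M := by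
      have hcont : Continuous fun θ : ℝ => ‖f (circleMap c R' θ)‖ := by
        apply Continuous.norm
        apply hd.continuousOn.comp_continuous (continuous_circleMap c R')
        intro θ
        exact circleMap_mem_closedBall c (by positivity) θ
      calc (∫ θ : ℝ in (0)..2 * Real.pi, ‖f (circleMap c R' θ)‖)
          ≤ ∫ _ : ℝ in (0)..2 * Real.pi, M := by
            apply intervalIntegral.integral_mono_on Real.two_pi_pos.le
              (hcont.intervalIntegrable _ _) (intervalIntegrable_const)
            intro θ _
            exact hM _ (circleMap_mem_closedBall c (by positivity) θ)
      _ = 2 * Real.pi * M := by simp [mul_comm]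
    have habsR : |(R' : ℝ)| = (R' : ℝ) := abs_of_pos hR
    rw [habsR]
    have h2pi : (0 : ℝ) < 2 * Real.pi := Real.two_pi_pos
    calc ((2 * Real.pi)⁻¹ * ∫ θ : ℝ in (0)..2 * Real.pi, ‖f (circleMap c R' θ)‖) *
          ((R' : ℝ))⁻¹ ^ k
        ≤ (2 * Real.pi)⁻¹ * (2 * Real.pi * M) * ((R' : ℝ))⁻¹ ^ k := by
          apply mul_le_mul_of_nonneg_right _ (by positivity)
          exact mul_le_mul_of_nonneg_left hint (by positivity)
    _ = M / (R' : ℝ) ^ k := by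
          rw [inv_mul_cancel_left₀ h2pi.ne', inv_pow, div_eq_mul_inv]
  calc (k.factorial : ℝ) * ‖cauchyPowerSeries f c R' k (fun _ => (1 : ℂ))‖
      ≤ (k.factorial : ℝ) * (M / (R' : ℝ) ^ k) := by
        exact mul_le_mul_of_nonneg_left hcoef (by positivity)
  _ = k.factorial * M / (R' : ℝ) ^ k := by ring

set_option maxHeartbeats 1000000 in
/-- If `ψ` is holomorphic on the sector `S⁰_ν` and satisfies
`|ψ(z)| ≤ C₀ |z|^α / (1 + |z|^β)` there, then for every `0 < ω < ν` the `k`-th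
derivative satisfies `|ψ^{(k)}(z)| ≤ C (1/|z|^k) |z|^α / (1 + |z|^β)` on `S⁰_ω`. -/
theorem stmt_0 (ν α β C₀ : ℝ) (hν0 : 0 < ν) (hνπ : ν < Real.pi)
    (hα : 0 < α) (hβ : α < β) (hC₀ : 0 < C₀) (k : ℕ) (hk : 0 < k)
    (ψ : ℂ → ℂ) (hψ : DifferentiableOn ℂ ψ (sector ν))
    (hbound : ∀ z ∈ sector ν, ‖ψ z‖ ≤ C₀ * ‖z‖ ^ α / (1 + ‖z‖ ^ β)) :
    ∀ ω, 0 < ω → ω < ν → ∃ C > 0, ∀ z ∈ sector ω,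
      ‖iteratedDerivWithin k ψ (sector ν) z‖ ≤
        C * (1 / ‖z‖ ^ k) * (‖z‖ ^ α / (1 + ‖z‖ ^ β)) := by
  intro ω hω0 hων
  -- choose δ
  set m : ℝ := min (ν - ω) (Real.pi / 2) with hm_def
  have hm0 : 0 < m := lt_min (by linarith) (by positivity)
  have hmπ : m < Real.pi := (min_le_right _ _).trans_lt (by linarith [Real.pi_pos])
  have hsinm : 0 < Real.sin m := Real.sin_pos_of_pos_of_lt_pi hm0 hmπ
  set δ : ℝ := min (Real.sin m / 2) (1 / 2) with hδ_def
  have hδ0 : 0 < δ := lt_min (by positivity) (by norm_num)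
  have hδh : δ ≤ 1 / 2 := min_le_right _ _
  have hδs : 2 * δ ≤ Real.sin m := by
    have := min_le_left (Real.sin m / 2) (1 / 2)
    rw [← hδ_def] at this
    linarith
  have hδ1 : δ < 1 := by linarith
  have h1δ : (0 : ℝ) < 1 - δ := by linarith
  have hpow1 : (0 : ℝ) < (1 + δ) ^ α := Real.rpow_pos_of_pos (by linarith) α
  have hpow2 : (0 : ℝ) < (1 - δ) ^ β := Real.rpow_pos_of_pos h1δ β
  -- the constant
  refine ⟨k.factorial * (C₀ * (1 + δ) ^ α / (1 - δ) ^ β) / δ ^ k,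
    div_pos (mul_pos (by exact_mod_cast k.factorial_pos)
      (div_pos (mul_pos hC₀ hpow1) hpow2)) (pow_pos hδ0 k), ?_⟩
  intro z hz
  obtain ⟨hz0, hzarg⟩ := hz
  have hzpos : 0 < ‖z‖ := norm_pos_iff.mpr hz0
  set R : ℝ := δ * ‖z‖ with hR_def
  have hR : 0 < R := by positivity
  have hball : Metric.closedBall z R ⊆ sector ν :=
    closedBall_subset_sector hω0 hων hνπ hδ0 hδh hδs ⟨hz0, hzarg⟩
  -- bound on the ball
  set M : ℝ := C₀ * (1 + δ) ^ α / (1 - δ) ^ β * (‖z‖ ^ α / (1 + ‖z‖ ^ β)) with hM_def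
  have hzden : (0 : ℝ) < 1 + ‖z‖ ^ β := by positivity
  have hMb : ∀ w ∈ Metric.closedBall z R, ‖ψ w‖ ≤ M := by
    intro w hw
    have hwsec : w ∈ sector ν := hball hw
    have hw0 : w ≠ 0 := hwsec.1
    have hwpos : 0 < ‖w‖ := norm_pos_iff.mpr hw0
    rw [Metric.mem_closedBall, dist_eq_norm] at hw
    have hup : ‖w‖ ≤ (1 + δ) * ‖z‖ := by
      calc ‖w‖ = ‖z + (w - z)‖ := by ring_nf
      _ ≤ ‖z‖ + ‖w - z‖ := norm_add_le _ _
      _ ≤ ‖z‖ + δ * ‖z‖ := by linarith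
      _ = (1 + δ) * ‖z‖ := by ring
    have hlo : (1 - δ) * ‖z‖ ≤ ‖w‖ := by
      have := norm_sub_norm_le z (z - w)
      simp only [sub_sub_cancel] at this
      have h2 : ‖z - w‖ = ‖w - z‖ := norm_sub_rev _ _
      nlinarith
    have hnum : ‖w‖ ^ α ≤ (1 + δ) ^ α * ‖z‖ ^ α := by
      rw [← Real.mul_rpow (by linarith) hzpos.le]
      exact Real.rpow_le_rpow hwpos.le hup hα.le
    have hden : (1 - δ) ^ β * (1 + ‖z‖ ^ β) ≤ 1 + ‖w‖ ^ β := by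
      have h1 : (1 - δ) ^ β * ‖z‖ ^ β ≤ ‖w‖ ^ β := by
        rw [← Real.mul_rpow (by linarith) hzpos.le]
        exact Real.rpow_le_rpow (by positivity) hlo (by linarith)
      have h2 : (1 - δ) ^ β ≤ 1 :=
        Real.rpow_le_one (by linarith) (by linarith) (by linarith)
      nlinarith [Real.rpow_nonneg (norm_nonneg z) β]
    have hdenpos : (0 : ℝ) < (1 - δ) ^ β * (1 + ‖z‖ ^ β) := mul_pos hpow2 hzden
    calc ‖ψ w‖ ≤ C₀ * ‖w‖ ^ α / (1 + ‖w‖ ^ β) := hbound w hwsec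
    _ ≤ C₀ * ((1 + δ) ^ α * ‖z‖ ^ α) / ((1 - δ) ^ β * (1 + ‖z‖ ^ β)) := by
        apply div_le_div₀ (mul_nonneg hC₀.le
          (mul_nonneg hpow1.le (Real.rpow_nonneg (norm_nonneg z) α))) _ hdenpos hden
        exact mul_le_mul_of_nonneg_left hnum hC₀.le
    _ = M := by
        have e1 : ((1 - δ) ^ β : ℝ) ≠ 0 := hpow2.ne'
        have e2 : (1 + ‖z‖ ^ β : ℝ) ≠ 0 := hzden.ne'
        rw [hM_def]
        field_simp
  -- rewrite the derivative within as the full derivative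
  have hopen : IsOpen (sector ν) := isOpen_sector hνπ
  have hzν : z ∈ sector ν := ⟨hz0, hzarg.trans hων⟩
  have hEq : iteratedDerivWithin k ψ (sector ν) z = iteratedDeriv k ψ z := by
    rw [iteratedDerivWithin_eq_iteratedFDerivWithin, iteratedDeriv_eq_iteratedFDeriv,
      iteratedFDerivWithin_of_isOpen k hopen hzν]
  rw [hEq]
  have hcauchy := cauchy_estimate hR (hψ.mono hball) hMb k
  refine hcauchy.trans ?_
  have hRk : R ^ k = δ ^ k * ‖z‖ ^ k := by rw [hR_def, mul_pow]
  rw [hRk, hM_def]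
  rw [le_iff_lt_or_eq]
  right
  have hδk : (0 : ℝ) < δ ^ k := by positivity
  have hzk : (0 : ℝ) < ‖z‖ ^ k := by positivity
  field_simp
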